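/- In the MAX-3-SAT shopping instance, for each variable i the shopper cannot simultaneously obtain the discount at shop tᵢ and at shop fᵢ; consequently the total discount of any purchase plan is at most 2n + m. -/
import Mathlib


/-- MAX-3-SAT reduction, discount upper bound: for every purchase plan, for
each variable `v` the shopper cannot obtain the discount at both `t_v` and
`f_v` (they share the book `x_v`), and hence the total discount is at most
`2n + m`. Construction as in the reduction: clause shops with discount 1 at
threshold 1, variable shops with discount 2 at threshold 3, unit prices. -/
theorem stmt_12 {n m : ℕ} (clauses : Fin m → Fin 3 → Fin n × Bool)
    (hlit : ∀ (v : Fin n) (sgn : Bool),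
      (Finset.univ.filter (fun p : Fin m × Fin 3 => clauses p.1 p.2 = (v, sgn))).card = 2) :
    let Book := (Fin m × Fin 3) ⊕ Fin n
    let Shop := Fin m ⊕ (Fin n × Bool)
    let sells : Shop → Book → Prop := fun s b =>
      match s, b with
      | .inl i, .inl (i', _) => i' = i
      | .inl _, .inr _ => False
      | .inr (v, sgn), .inl (i, j) => clauses i j = (v, sgn)
      | .inr (v, _), .inr v' => v' = v
    let dshop : Shop → ℕ := Sum.elim (fun _ => 1) (fun _ => 2)
    let tshop : Shop → ℕ := Sum.elim (fun _ => 1) (fun _ => 3)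
    let cnt : (Book → Shop) → Shop → ℕ := fun g s =>
      (Finset.univ.filter (fun b : Book => g b = s)).card
    ∀ g : Book → Shop, (∀ b, sells (g b) b) →
      (∀ v : Fin n,
        ¬(tshop (.inr (v, true)) ≤ cnt g (.inr (v, true)) ∧
          tshop (.inr (v, false)) ≤ cnt g (.inr (v, false)))) ∧
      ∑ s ∈ Finset.univ.filter (fun s : Shop => tshop s ≤ cnt g s), dshop s
        ≤ 2 * n + m := by
  intro Book Shop sells dshop tshop cnt g hg
  -- key lemma: if the variable shop (v,sgn) reaches the threshold 3, then the
  -- common book x_v is bought there.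
  have key : ∀ (v : Fin n) (sgn : Bool),
      3 ≤ cnt g (.inr (v, sgn)) → g (Sum.inr v) = Sum.inr (v, sgn) := by
    intro v sgn h3
    set S : Finset Book :=
      ((Finset.univ.filter (fun p : Fin m × Fin 3 => clauses p.1 p.2 = (v, sgn))).image
        Sum.inl) ∪ {Sum.inr v} with hS
    have hsub : (Finset.univ.filter (fun b : Book => g b = Sum.inr (v, sgn))) ⊆ S := by
      intro b hb
      simp only [Finset.mem_filter, Finset.mem_univ, true_and] at hb
      have := hg b
      rw [hb] at this
      rcases b with ⟨i, j⟩ | v'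
      · simp only [sells] at this
        simp only [hS, Finset.mem_union, Finset.mem_image, Finset.mem_filter,
          Finset.mem_univ, true_and]
        exact Or.inl ⟨(i, j), this, rfl⟩
      · simp only [sells] at this
        subst this
        simp [hS]
    have hScard : S.card = 3 := by
      rw [hS, Finset.card_union_of_disjoint, Finset.card_image_of_injective _
        Sum.inl_injective, hlit v sgn, Finset.card_singleton]
      simp
    have heq : (Finset.univ.filter (fun b : Book => g b = Sum.inr (v, sgn))) = S := by
      apply Finset.eq_of_subset_of_card_le hsub
      calc S.card = 3 := hScard
        _ ≤ _ := h3
    have : (Sum.inr v : Book) ∈ S := by simp [hS]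
    rw [← heq] at this
    simpa using this
  have hpart1 : ∀ v : Fin n,
      ¬(tshop (.inr (v, true)) ≤ cnt g (.inr (v, true)) ∧
        tshop (.inr (v, false)) ≤ cnt g (.inr (v, false))) := by
    intro v ⟨ht, hf⟩
    have h1 := key v true ht
    have h2 := key v false hf
    have : (Sum.inr (v, true) : Shop) = Sum.inr (v, false) := h1 ▸ h2
    exact Bool.noConfusion (congrArg (fun s => Sum.elim (fun _ => true) Prod.snd s) this)
  refine ⟨hpart1, ?_⟩
  rw [Finset.sum_filter, Fintype.sum_sum_type]
  have hm : ∑ i : Fin m, (if tshop (Sum.inl i) ≤ cnt g (Sum.inl i)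
      then dshop (Sum.inl i) else 0) ≤ m := by
    calc _ ≤ ∑ _i : Fin m, 1 := by
            apply Finset.sum_le_sum
            intro i _
            split <;> simp [dshop]
      _ = m := by simp
  have hn : ∑ p : Fin n × Bool, (if tshop (Sum.inr p) ≤ cnt g (Sum.inr p)
      then dshop (Sum.inr p) else 0) ≤ 2 * n := by
    rw [Fintype.sum_prod_type]
    calc _ ≤ ∑ _v : Fin n, 2 := by
            apply Finset.sum_le_sum
            intro v _
            rw [Fintype.sum_bool]
            have := hpart1 v
            by_cases ht : tshop (Sum.inr (v, true)) ≤ cnt g (Sum.inr (v, true))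
            · have hf : ¬ tshop (Sum.inr (v, false)) ≤ cnt g (Sum.inr (v, false)) :=
                fun hf => this ⟨ht, hf⟩
              simp [ht, hf, dshop]
            · simp only [if_neg ht, add_zero]
              split <;> simp [dshop]
      _ = 2 * n := by simp [mul_comm]
  omega
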